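/- Let R be a commutative Noetherian ring which is a unique factorization domain, and let 0 → A → B → C → 0 be a short exact sequence of finitely generated R-modules. Then for every i ≥ 0, the characteristic polynomial Δ_i(B) divides the product Δ_i(A) · Δ_0(C) in R. -/

import Mathlib

open Matrix LinearMap

/-- The ideal of `R` generated by the `k × k` minors of the matrix `M`.
(If `k = 0` this is all of `R`; if `k` exceeds the number of columns it is `0`.) -/
def minorsIdeal {R : Type*} [CommRing R] {n m : ℕ} (M : Matrix (Fin n) (Fin m) R)
    (k : ℕ) : Ideal R :=
  Ideal.span { x | ∃ (r : Fin k → Fin n) (c : Fin k → Fin m), x = (M.submatrix r c).det }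

/-- The `i`-th elementary (Fitting) ideal of a module presented by the `n × m` matrix `M`:
the ideal generated by the `(n - i) × (n - i)` minors of `M`. -/
def elemIdeal {R : Type*} [CommRing R] {n m : ℕ} (M : Matrix (Fin n) (Fin m) R)
    (i : ℕ) : Ideal R :=
  minorsIdeal M (n - i)

/-- `d` is a greatest common divisor of the elements of the ideal `I`. -/
def IsGCDOfIdeal {R : Type*} [CommRing R] (d : R) (I : Ideal R) : Prop :=
  (∀ x ∈ I, d ∣ x) ∧ ∀ e : R, (∀ x ∈ I, e ∣ x) → e ∣ d


section AuxFitting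


variable {R : Type*} [CommRing R]

def minors {ι κ : Type*} (M : Matrix ι κ R) (k : ℕ) : Ideal R :=
  Ideal.span { x | ∃ (r : Fin k → ι) (c : Fin k → κ), x = (M.submatrix r c).det }

lemma det_mem_minors {ι κ : Type*} (M : Matrix ι κ R) (k : ℕ) (r : Fin k → ι) (c : Fin k → κ) :
    (M.submatrix r c).det ∈ minors M k :=
  Ideal.subset_span ⟨r, c, rfl⟩

lemma minors_zero' {ι κ : Type*} (M : Matrix ι κ R) : minors M 0 = ⊤ := by
  rw [Ideal.eq_top_iff_one]
  simpa [Matrix.det_fin_zero] using det_mem_minors M 0 finZeroElim finZeroElim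

lemma minors_succ_le {ι κ : Type*} (M : Matrix ι κ R) (k : ℕ) :
    minors M (k+1) ≤ minors M k := by
  rw [minors, Ideal.span_le]
  rintro x ⟨r, c, rfl⟩
  rw [Matrix.det_succ_row_zero]
  refine Ideal.sum_mem _ fun j _ => ?_
  rw [Matrix.submatrix_submatrix]
  exact Ideal.mul_mem_left _ _ (det_mem_minors M k _ _)

lemma minors_le_minors {ι κ : Type*} (M : Matrix ι κ R) {k l : ℕ} (h : k ≤ l) :
    minors M l ≤ minors M k := by
  induction l, h using Nat.le_induction with
  | base => exact le_rfl
  | succ l hl ih => exact (minors_succ_le M l).trans ih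

lemma minors_submatrix_le {ι κ ι' κ' : Type*} (M : Matrix ι κ R) (f : ι' → ι) (g : κ' → κ)
    (k : ℕ) : minors (M.submatrix f g) k ≤ minors M k := by
  rw [minors, Ideal.span_le]
  rintro x ⟨r, c, rfl⟩
  rw [Matrix.submatrix_submatrix]
  exact det_mem_minors M k _ _

lemma minors_submatrix_equiv {ι κ ι' κ' : Type*} (M : Matrix ι κ R) (e : ι' ≃ ι) (e' : κ' ≃ κ)
    (k : ℕ) : minors (M.submatrix e e') k = minors M k := by
  refine le_antisymm (minors_submatrix_le ..) ?_
  have := minors_submatrix_le (M.submatrix e e') e.symm e'.symm k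
  simp [Matrix.submatrix_submatrix, Function.comp_def] at this
  exact this


lemma minors_le_of_range_le {ι κ1 κ2 : Type*} [Fintype ι] [Fintype κ1] [Fintype κ2]
    (M1 : Matrix ι κ1 R) (M2 : Matrix ι κ2 R)
    (h : LinearMap.range M2.mulVecLin ≤ LinearMap.range M1.mulVecLin) (k : ℕ) :
    minors M2 k ≤ minors M1 k := by
  classical
  have hcol : ∀ j, ∃ p : κ1 → R, M1 *ᵥ p = fun i => M2 i j := by
    intro j
    obtain ⟨p, hp⟩ := h ⟨Pi.single j 1, rfl⟩
    exact ⟨p, by simp [Matrix.mulVecLin_apply] at hp; exact hp⟩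
  choose p hp using hcol
  rw [minors, Ideal.span_le]
  rintro x ⟨r, c, rfl⟩
  have hA : ((M2.submatrix r c)ᵀ : Matrix (Fin k) (Fin k) R)
      = fun j => ∑ l : κ1, p (c j) l • fun i => M1 (r i) l := by
    funext j i
    have := congrFun (hp (c j)) (r i)
    simp only [Matrix.mulVec, dotProduct] at this
    simp only [Matrix.transpose_apply, Matrix.submatrix_apply, ← this]
    simp [Finset.sum_apply, mul_comm]
  have : (M2.submatrix r c).det = ((M2.submatrix r c)ᵀ).det := (Matrix.det_transpose _).symm
  rw [this]
  rw [show ((M2.submatrix r c)ᵀ).det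
      = Matrix.detRowAlternating ((M2.submatrix r c)ᵀ) from rfl, hA]
  rw [show (Matrix.detRowAlternating (R := R) (n := Fin k))
        (fun j => ∑ l : κ1, p (c j) l • fun i => M1 (r i) l)
      = (Matrix.detRowAlternating (R := R) (n := Fin k)).toMultilinearMap
        (fun j => ∑ l : κ1, (fun j' l' => p (c j') l' • fun i => M1 (r i) l') j l) from rfl]
  rw [MultilinearMap.map_sum]
  refine Ideal.sum_mem _ fun φ _ => ?_
  rw [MultilinearMap.map_smul_univ]
  have hgen : (Matrix.detRowAlternating (R := R) (n := Fin k)).toMultilinearMap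
      (fun j => fun i => M1 (r i) (φ j)) ∈ minors M1 k := by
    have : (fun j => fun i => M1 (r i) (φ j)) = ((M1.submatrix r φ)ᵀ : Matrix (Fin k) (Fin k) R) := by
      funext j i; rfl
    rw [show (Matrix.detRowAlternating (R := R) (n := Fin k)).toMultilinearMap
        (fun j => fun i => M1 (r i) (φ j)) = Matrix.det (fun j => fun i => M1 (r i) (φ j)) from rfl,
      this, Matrix.det_transpose]
    exact det_mem_minors M1 k r φ
  exact Ideal.mul_mem_left _ _ hgen

lemma minors_single_step {ι κ : Type*} (M : Matrix ι κ R) (X : Matrix ι (Fin 1) R) (t : ℕ) :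
    minors (Matrix.fromBlocks M X 0 (1 : Matrix (Fin 1) (Fin 1) R)) (t+1) ≤ minors M t := by
  classical
  set N := Matrix.fromBlocks M X 0 (1 : Matrix (Fin 1) (Fin 1) R) with hNdef
  rw [minors, Ideal.span_le]
  rintro x ⟨r, c, rfl⟩
  by_cases hr2 : ∃ i i' : Fin (t+1), i ≠ i' ∧ r i = Sum.inr 0 ∧ r i' = Sum.inr 0
  · obtain ⟨i, i', hne, h1, h2⟩ := hr2
    rw [Matrix.det_zero_of_row_eq hne (by
      funext j
      rw [Matrix.submatrix_apply, Matrix.submatrix_apply, h1, h2])]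
    exact Ideal.zero_mem _
  by_cases hc2 : ∃ j j' : Fin (t+1), j ≠ j' ∧ c j = Sum.inr 0 ∧ c j' = Sum.inr 0
  · obtain ⟨j, j', hne, h1, h2⟩ := hc2
    rw [Matrix.det_zero_of_column_eq hne (by
      intro i
      rw [Matrix.submatrix_apply, Matrix.submatrix_apply, h1, h2])]
    exact Ideal.zero_mem _
  push_neg at hr2 hc2
  have hfin1 : ∀ b : Fin 1, b = 0 := fun b => Subsingleton.elim b 0
  by_cases hrex : ∃ i0, r i0 = Sum.inr 0
  · obtain ⟨i0, hi0⟩ := hrex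
    have hrl : ∀ i : Fin t, ∃ a, r (i0.succAbove i) = Sum.inl a := by
      intro i
      rcases h : r (i0.succAbove i) with a | b
      · exact ⟨a, rfl⟩
      · rw [hfin1 b] at h
        exact absurd h (hr2 i0 _ (Ne.symm (Fin.succAbove_ne i0 i)) hi0)
    choose rr hrr using hrl
    by_cases hcex : ∃ j0, c j0 = Sum.inr 0
    · obtain ⟨j0, hj0⟩ := hcex
      have hcl : ∀ j : Fin t, ∃ b, c (j0.succAbove j) = Sum.inl b := by
        intro j
        rcases h : c (j0.succAbove j) with b | b
        · exact ⟨b, rfl⟩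
        · rw [hfin1 b] at h
          exact absurd h (hc2 j0 _ (Ne.symm (Fin.succAbove_ne j0 j)) hj0)
      choose cc hcc using hcl
      rw [Matrix.det_succ_row _ i0]
      refine Ideal.sum_mem _ fun j _ => ?_
      by_cases hj : j = j0
      · subst hj
        have hsub : (N.submatrix r c).submatrix i0.succAbove j.succAbove
            = M.submatrix rr cc := by
          ext i' j'
          rw [Matrix.submatrix_apply, Matrix.submatrix_apply, Matrix.submatrix_apply,
            hrr i', hcc j']
          rfl
        rw [hsub]
        exact Ideal.mul_mem_left _ _ (det_mem_minors M t rr cc)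
      · have : (N.submatrix r c) i0 j = 0 := by
          rcases h : c j with b | b
          · rw [Matrix.submatrix_apply, hi0, h]; rfl
          · rw [hfin1 b] at h
            exact absurd h (hc2 j0 j (Ne.symm hj) hj0)
        rw [this]
        rw [mul_zero, zero_mul]
        exact Ideal.zero_mem _
    · push_neg at hcex
      have : ∀ j, (N.submatrix r c) i0 j = 0 := by
        intro j
        rcases h : c j with b | b
        · rw [Matrix.submatrix_apply, hi0, h]; rfl
        · exact absurd (hfin1 b ▸ h) (hcex j)
      rw [Matrix.det_eq_zero_of_row_eq_zero i0 this]
      exact Ideal.zero_mem _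
  · push_neg at hrex
    have hrl : ∀ i : Fin (t+1), ∃ a, r i = Sum.inl a := by
      intro i
      rcases h : r i with a | b
      · exact ⟨a, rfl⟩
      · exact absurd (hfin1 b ▸ h) (hrex i)
    choose rr hrr using hrl
    by_cases hcex : ∃ j0, c j0 = Sum.inr 0
    · obtain ⟨j0, hj0⟩ := hcex
      have hcl : ∀ j : Fin t, ∃ b, c (j0.succAbove j) = Sum.inl b := by
        intro j
        rcases h : c (j0.succAbove j) with b | b
        · exact ⟨b, rfl⟩
        · rw [hfin1 b] at h
          exact absurd h (hc2 j0 _ (Ne.symm (Fin.succAbove_ne j0 j)) hj0)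
      choose cc hcc using hcl
      rw [Matrix.det_succ_column _ j0]
      refine Ideal.sum_mem _ fun i _ => ?_
      have hsub : (N.submatrix r c).submatrix i.succAbove j0.succAbove
          = M.submatrix (rr ∘ i.succAbove) cc := by
        ext i' j'
        rw [Matrix.submatrix_apply, Matrix.submatrix_apply, Matrix.submatrix_apply,
          hrr (i.succAbove i'), hcc j']
        rfl
      rw [hsub]
      exact Ideal.mul_mem_left _ _ (det_mem_minors M t _ cc)
    · push_neg at hcex
      have hcl : ∀ j : Fin (t+1), ∃ b, c j = Sum.inl b := by
        intro j
        rcases h : c j with b | b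
        · exact ⟨b, rfl⟩
        · exact absurd (hfin1 b ▸ h) (hcex j)
      choose cc hcc using hcl
      have hsub : N.submatrix r c = M.submatrix rr cc := by
        ext i' j'
        rw [Matrix.submatrix_apply, Matrix.submatrix_apply, hrr i', hcc j']
        rfl
      rw [hsub]
      exact minors_succ_le M t (det_mem_minors M (t+1) rr cc)

lemma minors_oneBlock_le_fin {ι κ : Type*} (n : ℕ) (M : Matrix ι κ R) (X : Matrix ι (Fin n) R)
    (t : ℕ) :
    minors (Matrix.fromBlocks M X 0 (1 : Matrix (Fin n) (Fin n) R)) (t + n) ≤ minors M t := by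
  classical
  induction n generalizing t with
  | zero =>
    have h : Matrix.fromBlocks M X 0 (1 : Matrix (Fin 0) (Fin 0) R)
        = M.submatrix (Equiv.sumEmpty ι (Fin 0)) (Equiv.sumEmpty κ (Fin 0)) := by
      ext (i | i) (j | j)
      · rfl
      · exact j.elim0
      · exact i.elim0
      · exact i.elim0
    rw [h, minors_submatrix_equiv]
    exact le_rfl
  | succ n ih =>
    have hcs : ∀ m (q' : Fin m), Fin.castSucc q' = Fin.castAdd 1 q' := fun _ _ => rfl
    let X' : Matrix ι (Fin n) R := X.submatrix (fun a => a) Fin.castSucc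
    let Xhat : Matrix (ι ⊕ Fin n) (Fin 1) R :=
      Matrix.of (fun p _ => Sum.elim (fun a => X a (Fin.last n)) (fun _ => (0:R)) p)
    let N' := Matrix.fromBlocks (Matrix.fromBlocks M X' 0 (1 : Matrix (Fin n) (Fin n) R)) Xhat 0
      (1 : Matrix (Fin 1) (Fin 1) R)
    let e1 : ι ⊕ Fin (n+1) ≃ (ι ⊕ Fin n) ⊕ Fin 1 :=
      ((Equiv.refl ι).sumCongr finSumFinEquiv.symm).trans (Equiv.sumAssoc ι (Fin n) (Fin 1)).symm
    let e2 : κ ⊕ Fin (n+1) ≃ (κ ⊕ Fin n) ⊕ Fin 1 :=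
      ((Equiv.refl κ).sumCongr finSumFinEquiv.symm).trans (Equiv.sumAssoc κ (Fin n) (Fin 1)).symm
    have he1l : ∀ a : ι, e1 (Sum.inl a) = Sum.inl (Sum.inl a) := fun a => rfl
    have he2l : ∀ b : κ, e2 (Sum.inl b) = Sum.inl (Sum.inl b) := fun b => rfl
    have he1c : ∀ p : Fin n, e1 (Sum.inr (Fin.castSucc p)) = Sum.inl (Sum.inr p) := by
      intro p
      show (Equiv.sumAssoc ι (Fin n) (Fin 1)).symm
        (Sum.inr (finSumFinEquiv.symm (Fin.castSucc p))) = Sum.inl (Sum.inr p)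
      rw [hcs, finSumFinEquiv_symm_apply_castAdd, Equiv.sumAssoc_symm_apply_inr_inl]
    have he2c : ∀ q : Fin n, e2 (Sum.inr (Fin.castSucc q)) = Sum.inl (Sum.inr q) := by
      intro q
      show (Equiv.sumAssoc κ (Fin n) (Fin 1)).symm
        (Sum.inr (finSumFinEquiv.symm (Fin.castSucc q))) = Sum.inl (Sum.inr q)
      rw [hcs, finSumFinEquiv_symm_apply_castAdd, Equiv.sumAssoc_symm_apply_inr_inl]
    have he1last : e1 (Sum.inr (Fin.last n)) = Sum.inr 0 := by
      show (Equiv.sumAssoc ι (Fin n) (Fin 1)).symm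
        (Sum.inr (finSumFinEquiv.symm (Fin.last n))) = Sum.inr 0
      rw [finSumFinEquiv_symm_last, Equiv.sumAssoc_symm_apply_inr_inr]
    have he2last : e2 (Sum.inr (Fin.last n)) = Sum.inr 0 := by
      show (Equiv.sumAssoc κ (Fin n) (Fin 1)).symm
        (Sum.inr (finSumFinEquiv.symm (Fin.last n))) = Sum.inr 0
      rw [finSumFinEquiv_symm_last, Equiv.sumAssoc_symm_apply_inr_inr]
    have key : Matrix.fromBlocks M X 0 (1 : Matrix (Fin (n+1)) (Fin (n+1)) R)
        = N'.submatrix e1 e2 := by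
      ext i j
      rw [Matrix.submatrix_apply]
      rcases i with a | p <;> rcases j with b | q
      · rw [he1l, he2l]; rfl
      · rw [he1l]
        induction q using Fin.lastCases with
        | last => rw [he2last]; rfl
        | cast q' => rw [he2c]; rfl
      · rw [he2l]
        induction p using Fin.lastCases with
        | last => rw [he1last]; rfl
        | cast p' => rw [he1c]; rfl
      · induction p using Fin.lastCases with
        | last =>
          induction q using Fin.lastCases with
          | last =>
            rw [he1last, he2last]
            show (1 : Matrix (Fin (n+1)) (Fin (n+1)) R) _ _
              = (1 : Matrix (Fin 1) (Fin 1) R) 0 0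
            simp [Matrix.one_apply]
          | cast q' =>
            rw [he1last, he2c]
            show (1 : Matrix (Fin (n+1)) (Fin (n+1)) R) _ _ = (0 : Matrix (Fin 1) (Fin n) R) 0 q'
            simp [Matrix.one_apply, (Fin.castSucc_lt_last q').ne']
        | cast p' =>
          induction q using Fin.lastCases with
          | last =>
            rw [he1c, he2last]
            show (1 : Matrix (Fin (n+1)) (Fin (n+1)) R) _ _ = Xhat (Sum.inr p') 0
            show _ = (0 : R)
            simp [Matrix.one_apply, (Fin.castSucc_lt_last p').ne]
          | cast q' =>
            rw [he1c, he2c]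
            show (1 : Matrix (Fin (n+1)) (Fin (n+1)) R) _ _ = (1 : Matrix (Fin n) (Fin n) R) p' q'
            simp [Matrix.one_apply, Fin.castSucc_inj]
    rw [key, minors_submatrix_equiv]
    have harith : t + (n+1) = (t + n) + 1 := by omega
    rw [harith]
    exact (minors_single_step _ Xhat (t+n)).trans (ih X' t)

lemma minors_oneBlock_le {ι κ ι2 : Type*} [Fintype ι2] [DecidableEq ι2]
    (M : Matrix ι κ R) (X : Matrix ι ι2 R) (t : ℕ) :
    minors (Matrix.fromBlocks M X 0 (1 : Matrix ι2 ι2 R)) (t + Fintype.card ι2)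
      ≤ minors M t := by
  classical
  let e : ι2 ≃ Fin (Fintype.card ι2) := Fintype.equivFin ι2
  have key : Matrix.fromBlocks M X 0 (1 : Matrix ι2 ι2 R)
      = (Matrix.fromBlocks M (X.submatrix (fun a => a) e.symm) 0
          (1 : Matrix (Fin (Fintype.card ι2)) (Fin (Fintype.card ι2)) R)).submatrix
        ((Equiv.refl ι).sumCongr e) ((Equiv.refl κ).sumCongr e) := by
    ext (a | p) (b | q)
    · rfl
    · show X a q = X a (e.symm (e q))
      rw [Equiv.symm_apply_apply]
    · rfl
    · show (1 : Matrix ι2 ι2 R) p q = (1 : Matrix (Fin _) (Fin _) R) (e p) (e q)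
      simp [Matrix.one_apply, EmbeddingLike.apply_eq_iff_eq]
  rw [key, minors_submatrix_equiv]
  exact minors_oneBlock_le_fin (Fintype.card ι2) M _ t

lemma le_minors_oneBlock {ι κ ι2 : Type*} [Fintype ι2] [DecidableEq ι2]
    (M : Matrix ι κ R) (X : Matrix ι ι2 R) (t s : ℕ) (hs : s ≤ Fintype.card ι2) :
    minors M t ≤ minors (Matrix.fromBlocks M X 0 (1 : Matrix ι2 ι2 R)) (t + s) := by
  classical
  obtain ⟨emb⟩ : Nonempty (Fin s ↪ ι2) := Function.Embedding.nonempty_iff_card_le.2 (by simpa)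
  rw [minors, Ideal.span_le]
  rintro x ⟨r, c, rfl⟩
  set N := Matrix.fromBlocks M X 0 (1 : Matrix ι2 ι2 R) with hN
  have key : N.submatrix (Sum.elim (Sum.inl ∘ r) (Sum.inr ∘ emb) ∘ finSumFinEquiv.symm)
        (Sum.elim (Sum.inl ∘ c) (Sum.inr ∘ emb) ∘ finSumFinEquiv.symm)
      = (Matrix.fromBlocks (M.submatrix r c) (X.submatrix r emb) 0
          (1 : Matrix (Fin s) (Fin s) R)).submatrix finSumFinEquiv.symm finSumFinEquiv.symm := by
    ext i j
    rw [Matrix.submatrix_apply, Matrix.submatrix_apply, Function.comp_apply,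
      Function.comp_apply]
    rcases finSumFinEquiv.symm i with p | p <;> rcases finSumFinEquiv.symm j with q | q
    · rfl
    · rfl
    · rfl
    · show (1 : Matrix ι2 ι2 R) (emb p) (emb q) = (1 : Matrix (Fin s) (Fin s) R) p q
      simp [Matrix.one_apply, emb.injective.eq_iff]
  have hdet : (M.submatrix r c).det
      = (N.submatrix (Sum.elim (Sum.inl ∘ r) (Sum.inr ∘ emb) ∘ finSumFinEquiv.symm)
        (Sum.elim (Sum.inl ∘ c) (Sum.inr ∘ emb) ∘ finSumFinEquiv.symm)).det := by
    rw [key]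
    rw [Matrix.det_submatrix_equiv_self finSumFinEquiv.symm]
    rw [Matrix.det_fromBlocks_zero₂₁, Matrix.det_one, mul_one]
  rw [hdet]
  exact det_mem_minors N (t+s) _ _

lemma sum_elim_comp_decomp {α β γ : Type*} (u : α ⊕ β → γ) :
    u = Sum.elim (u ∘ Sum.inl) (u ∘ Sum.inr) := by
  funext x; rcases x with a | b <;> rfl

lemma ker_combined {ι1 κ1 ι2 : Type*} [Fintype ι1] [Fintype κ1] [Fintype ι2]
    [DecidableEq ι1] [DecidableEq ι2]
    {B : Type*} [AddCommGroup B] [Module R B]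
    (M1 : Matrix ι1 κ1 R) (p1 : (ι1 → R) →ₗ[R] B) (hp1 : Function.Surjective p1)
    (hker1 : LinearMap.ker p1 = LinearMap.range M1.mulVecLin)
    (p2 : (ι2 → R) →ₗ[R] B) :
    ∃ V : Matrix ι1 ι2 R,
      LinearMap.ker (p1.comp (LinearMap.funLeft R R Sum.inl)
          + p2.comp (LinearMap.funLeft R R Sum.inr))
        = LinearMap.range (Matrix.fromBlocks M1 (-V) 0 (1 : Matrix ι2 ι2 R)).mulVecLin := by
  classical
  have hv : ∀ k : ι2, ∃ v : ι1 → R, p1 v = p2 (Pi.single k 1) := fun k => hp1 _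
  choose v hvv using hv
  set V : Matrix ι1 ι2 R := Matrix.of (fun i k => v k i) with hV
  refine ⟨V, ?_⟩
  have hkey : p1.comp V.mulVecLin = p2 := by
    apply Module.Basis.ext (Pi.basisFun R ι2)
    intro k
    rw [Pi.basisFun_apply]
    show p1 (V *ᵥ Pi.single k 1) = p2 (Pi.single k 1)
    rw [Matrix.mulVec_single]
    simp [hV]
    exact hvv k
  have hkey' : ∀ w : ι2 → R, p1 (V *ᵥ w) = p2 w := fun w => by
    simpa using LinearMap.congr_fun hkey w
  apply le_antisymm
  · intro u hu
    simp only [LinearMap.mem_ker, LinearMap.add_apply, LinearMap.comp_apply] at hu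
    have hu' : p1 (u ∘ Sum.inl) + p2 (u ∘ Sum.inr) = 0 := hu
    have h1 : p1 ((u ∘ Sum.inl) + V *ᵥ (u ∘ Sum.inr)) = 0 := by
      rw [map_add, hkey' (u ∘ Sum.inr)]
      exact hu'
    have h2 : ((u ∘ Sum.inl) + V *ᵥ (u ∘ Sum.inr)) ∈ LinearMap.range M1.mulVecLin := by
      rw [← hker1]; exact h1
    obtain ⟨w, hw⟩ := h2
    refine ⟨Sum.elim w (u ∘ Sum.inr), ?_⟩
    rw [Matrix.mulVecLin_apply, Matrix.fromBlocks_mulVec]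
    simp only [Sum.elim_comp_inl, Sum.elim_comp_inr]
    rw [Matrix.mulVecLin_apply] at hw
    rw [Matrix.neg_mulVec, hw, Matrix.zero_mulVec, Matrix.one_mulVec, zero_add]
    funext x
    rcases x with a | b
    · show (u ∘ Sum.inl + V *ᵥ (u ∘ Sum.inr) + -(V *ᵥ (u ∘ Sum.inr))) a = u (Sum.inl a)
      simp
    · rfl
  · rintro u ⟨w, rfl⟩
    rw [LinearMap.mem_ker, LinearMap.add_apply, LinearMap.comp_apply, LinearMap.comp_apply]
    have hm : (Matrix.fromBlocks M1 (-V) 0 (1 : Matrix ι2 ι2 R)).mulVecLin w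
        = Sum.elim (M1 *ᵥ (w ∘ Sum.inl) + (-V) *ᵥ (w ∘ Sum.inr))
            ((0 : Matrix ι2 κ1 R) *ᵥ (w ∘ Sum.inl) + (1 : Matrix ι2 ι2 R) *ᵥ (w ∘ Sum.inr)) := by
      rw [Matrix.mulVecLin_apply]
      conv_lhs => rw [sum_elim_comp_decomp w]
      rw [Matrix.fromBlocks_mulVec]
      simp only [Sum.elim_comp_inl, Sum.elim_comp_inr]
    rw [hm]
    have hL : LinearMap.funLeft R R (Sum.inl : ι1 → ι1 ⊕ ι2)
        (Sum.elim (M1 *ᵥ (w ∘ Sum.inl) + (-V) *ᵥ (w ∘ Sum.inr))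
          ((0 : Matrix ι2 κ1 R) *ᵥ (w ∘ Sum.inl) + (1 : Matrix ι2 ι2 R) *ᵥ (w ∘ Sum.inr)))
        = M1 *ᵥ (w ∘ Sum.inl) + (-V) *ᵥ (w ∘ Sum.inr) := rfl
    have hR : LinearMap.funLeft R R (Sum.inr : ι2 → ι1 ⊕ ι2)
        (Sum.elim (M1 *ᵥ (w ∘ Sum.inl) + (-V) *ᵥ (w ∘ Sum.inr))
          ((0 : Matrix ι2 κ1 R) *ᵥ (w ∘ Sum.inl) + (1 : Matrix ι2 ι2 R) *ᵥ (w ∘ Sum.inr)))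
        = (0 : Matrix ι2 κ1 R) *ᵥ (w ∘ Sum.inl) + (1 : Matrix ι2 ι2 R) *ᵥ (w ∘ Sum.inr) :=
      rfl
    rw [hL, hR, Matrix.zero_mulVec, Matrix.one_mulVec, zero_add]
    have hmem : p1 (M1 *ᵥ (w ∘ Sum.inl)) = 0 := by
      have hin : (M1 *ᵥ (w ∘ Sum.inl)) ∈ LinearMap.range M1.mulVecLin := ⟨w ∘ Sum.inl, rfl⟩
      rw [← hker1] at hin
      exact hin
    rw [map_add, hmem, zero_add, Matrix.neg_mulVec, map_neg, hkey' (w ∘ Sum.inr)]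
    exact neg_add_cancel _

lemma minors_pres_le {ι1 κ1 ι2 κ2 : Type*} [Fintype ι1] [Fintype κ1] [Fintype ι2] [Fintype κ2]
    [DecidableEq ι1] [DecidableEq ι2]
    {B : Type*} [AddCommGroup B] [Module R B]
    (M1 : Matrix ι1 κ1 R) (p1 : (ι1 → R) →ₗ[R] B) (hp1 : Function.Surjective p1)
    (hker1 : LinearMap.ker p1 = LinearMap.range M1.mulVecLin)
    (M2 : Matrix ι2 κ2 R) (p2 : (ι2 → R) →ₗ[R] B) (hp2 : Function.Surjective p2)
    (hker2 : LinearMap.ker p2 = LinearMap.range M2.mulVecLin) (i : ℕ) :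
    minors M1 (Fintype.card ι1 - i) ≤ minors M2 (Fintype.card ι2 - i) := by
  classical
  by_cases hi2 : Fintype.card ι2 < i
  · rw [Nat.sub_eq_zero_of_le hi2.le, minors_zero']
    exact le_top
  push_neg at hi2
  obtain ⟨V, hV⟩ := ker_combined M1 p1 hp1 hker1 p2
  obtain ⟨W, hW⟩ := ker_combined M2 p2 hp2 hker2 p1
  set N1 := Matrix.fromBlocks M1 (-V) 0 (1 : Matrix ι2 ι2 R) with hN1
  set N2 := Matrix.fromBlocks M2 (-W) 0 (1 : Matrix ι1 ι1 R) with hN2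
  -- the two combined projections
  set q1 := p1.comp (LinearMap.funLeft R R (Sum.inl : ι1 → ι1 ⊕ ι2))
      + p2.comp (LinearMap.funLeft R R (Sum.inr : ι2 → ι1 ⊕ ι2)) with hq1
  set q2 := p2.comp (LinearMap.funLeft R R (Sum.inl : ι2 → ι2 ⊕ ι1))
      + p1.comp (LinearMap.funLeft R R (Sum.inr : ι1 → ι2 ⊕ ι1)) with hq2
  -- ker q1 = row-swapped range of N2
  have hswap : LinearMap.ker q1
      = LinearMap.range (N2.submatrix (Sum.swap : ι1 ⊕ ι2 → ι2 ⊕ ι1)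
          (fun x : κ2 ⊕ ι1 => x)).mulVecLin := by
    ext u
    have hswmul : ∀ w : κ2 ⊕ ι1 → R,
        (N2.submatrix (Sum.swap : ι1 ⊕ ι2 → ι2 ⊕ ι1) (fun x : κ2 ⊕ ι1 => x)).mulVecLin w
          = (N2.mulVecLin w) ∘ Sum.swap := fun w => rfl
    constructor
    · intro hu
      have : u ∘ Sum.swap ∈ LinearMap.ker q2 := by
        rw [LinearMap.mem_ker, hq2]
        rw [LinearMap.mem_ker, hq1] at hu
        have h1 : (u ∘ Sum.swap) ∘ Sum.inl = u ∘ Sum.inr := rfl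
        have h2 : (u ∘ Sum.swap) ∘ Sum.inr = u ∘ Sum.inl := rfl
        show p2 ((u ∘ Sum.swap) ∘ Sum.inl) + p1 ((u ∘ Sum.swap) ∘ Sum.inr) = 0
        rw [h1, h2, add_comm]
        exact hu
      rw [hW] at this
      obtain ⟨w, hw⟩ := this
      refine ⟨w, ?_⟩
      rw [hswmul, hw]
      funext x
      rw [Function.comp_apply, Function.comp_apply, Sum.swap_swap]
    · rintro ⟨w, rfl⟩
      rw [LinearMap.mem_ker, hq1]
      have : N2.mulVecLin w ∈ LinearMap.range N2.mulVecLin := ⟨w, rfl⟩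
      rw [← hW] at this
      rw [LinearMap.mem_ker, hq2] at this
      rw [hswmul]
      show p1 (((N2.mulVecLin w) ∘ Sum.swap) ∘ Sum.inl)
        + p2 (((N2.mulVecLin w) ∘ Sum.swap) ∘ Sum.inr) = 0
      have h1 : ((N2.mulVecLin w) ∘ Sum.swap) ∘ Sum.inl = (N2.mulVecLin w) ∘ Sum.inr := rfl
      have h2 : ((N2.mulVecLin w) ∘ Sum.swap) ∘ Sum.inr = (N2.mulVecLin w) ∘ Sum.inl := rfl
      rw [h1, h2, add_comm]
      exact this
  have hrange : LinearMap.range N1.mulVecLin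
      ≤ LinearMap.range (N2.submatrix (Sum.swap : ι1 ⊕ ι2 → ι2 ⊕ ι1)
          (fun x : κ2 ⊕ ι1 => x)).mulVecLin := by
    rw [← hswap, ← hV]
  set s := Fintype.card ι1 + Fintype.card ι2 - i - (Fintype.card ι1 - i) with hs
  have hs2 : s ≤ Fintype.card ι2 := by omega
  have hstep1 : minors M1 (Fintype.card ι1 - i) ≤ minors N1 (Fintype.card ι1 - i + s) :=
    le_minors_oneBlock M1 (-V) _ s hs2
  have harith1 : Fintype.card ι1 - i + s = Fintype.card ι1 + Fintype.card ι2 - i := by omega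
  rw [harith1] at hstep1
  have hstep2 : minors N1 (Fintype.card ι1 + Fintype.card ι2 - i)
      ≤ minors (N2.submatrix (Sum.swap : ι1 ⊕ ι2 → ι2 ⊕ ι1) (fun x : κ2 ⊕ ι1 => x))
        (Fintype.card ι1 + Fintype.card ι2 - i) :=
    minors_le_of_range_le _ _ hrange _
  have hstep3 : minors (N2.submatrix (Sum.swap : ι1 ⊕ ι2 → ι2 ⊕ ι1) (fun x : κ2 ⊕ ι1 => x))
        (Fintype.card ι1 + Fintype.card ι2 - i)
      ≤ minors N2 (Fintype.card ι1 + Fintype.card ι2 - i) :=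
    minors_submatrix_le _ _ _ _
  have harith2 : Fintype.card ι1 + Fintype.card ι2 - i
      = (Fintype.card ι2 - i) + Fintype.card ι1 := by omega
  have hstep4 : minors N2 (Fintype.card ι1 + Fintype.card ι2 - i)
      ≤ minors M2 (Fintype.card ι2 - i) := by
    rw [harith2]
    exact minors_oneBlock_le M2 (-W) _
  exact hstep1.trans (hstep2.trans (hstep3.trans hstep4))

lemma minors_pres_eq {ι1 κ1 ι2 κ2 : Type*} [Fintype ι1] [Fintype κ1] [Fintype ι2] [Fintype κ2]
    [DecidableEq ι1] [DecidableEq ι2]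
    {B : Type*} [AddCommGroup B] [Module R B]
    (M1 : Matrix ι1 κ1 R) (p1 : (ι1 → R) →ₗ[R] B) (hp1 : Function.Surjective p1)
    (hker1 : LinearMap.ker p1 = LinearMap.range M1.mulVecLin)
    (M2 : Matrix ι2 κ2 R) (p2 : (ι2 → R) →ₗ[R] B) (hp2 : Function.Surjective p2)
    (hker2 : LinearMap.ker p2 = LinearMap.range M2.mulVecLin) (i : ℕ) :
    minors M1 (Fintype.card ι1 - i) = minors M2 (Fintype.card ι2 - i) :=
  le_antisymm (minors_pres_le M1 p1 hp1 hker1 M2 p2 hp2 hker2 i)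
    (minors_pres_le M2 p2 hp2 hker2 M1 p1 hp1 hker1 i)

lemma horseshoe_pres
    {A B C : Type*} [AddCommGroup A] [Module R A] [AddCommGroup B] [Module R B]
    [AddCommGroup C] [Module R C]
    (f : A →ₗ[R] B) (g : B →ₗ[R] C)
    (hf : Function.Injective f) (hg : Function.Surjective g)
    (hexact : LinearMap.ker g = LinearMap.range f)
    {na ma nc mc : ℕ}
    (MA : Matrix (Fin na) (Fin ma) R) (pA : (Fin na → R) →ₗ[R] A)
    (hpA : Function.Surjective pA)
    (hkerA : LinearMap.ker pA = LinearMap.range MA.mulVecLin)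
    (MC : Matrix (Fin nc) (Fin mc) R) (pC : (Fin nc → R) →ₗ[R] C)
    (hpC : Function.Surjective pC)
    (hkerC : LinearMap.ker pC = LinearMap.range MC.mulVecLin) :
    ∃ (Am : Matrix (Fin na) (Fin mc) R) (p' : ((Fin nc ⊕ Fin na) → R) →ₗ[R] B),
      Function.Surjective p' ∧
      LinearMap.ker p'
        = LinearMap.range (Matrix.fromBlocks MC 0 (-Am) MA).mulVecLin := by
  classical
  -- lifts of the generators of C
  have hy : ∀ j : Fin nc, ∃ y : B, g y = pC (Pi.single j 1) := fun j => hg _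
  choose y hyy using hy
  -- the top map
  set ptop : (Fin nc → R) →ₗ[R] B
    := ∑ j : Fin nc, (LinearMap.proj j : ((Fin nc → R)) →ₗ[R] R).smulRight (y j) with hptop
  have hptop_single : ∀ j : Fin nc, ptop (Pi.single j 1) = y j := by
    intro j
    rw [hptop]
    rw [LinearMap.sum_apply]
    rw [Finset.sum_eq_single j]
    · simp
    · intro k _ hk
      simp [Pi.single_apply, hk.symm]
    · simp
  have hgtop : g.comp ptop = pC := by
    apply Module.Basis.ext (Pi.basisFun R (Fin nc))
    intro j
    rw [Pi.basisFun_apply, LinearMap.comp_apply, hptop_single j, hyy j]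
  have hgtop' : ∀ x, g (ptop x) = pC x := fun x => LinearMap.congr_fun hgtop x
  -- lifts of the relations of C
  have ha : ∀ k : Fin mc, ∃ u : Fin na → R, f (pA u) = ptop (MC *ᵥ Pi.single k 1) := by
    intro k
    have h1 : g (ptop (MC *ᵥ Pi.single k 1)) = 0 := by
      rw [hgtop']
      have : (MC *ᵥ Pi.single k 1) ∈ LinearMap.range MC.mulVecLin := ⟨Pi.single k 1, rfl⟩
      rw [← hkerC] at this
      exact this
    have h2 : ptop (MC *ᵥ Pi.single k 1) ∈ LinearMap.range f := by
      rw [← hexact]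
      exact h1
    obtain ⟨aa, haa⟩ := h2
    obtain ⟨u, hu⟩ := hpA aa
    exact ⟨u, by rw [hu, haa]⟩
  choose a haa using ha
  set Am : Matrix (Fin na) (Fin mc) R := Matrix.of (fun i k => a k i) with hAm
  have hAmkey : ∀ w : Fin mc → R, f (pA (Am *ᵥ w)) = ptop (MC *ᵥ w) := by
    intro w
    have : (f.comp pA).comp Am.mulVecLin = ptop.comp MC.mulVecLin := by
      apply Module.Basis.ext (Pi.basisFun R (Fin mc))
      intro k
      rw [Pi.basisFun_apply]
      show f (pA (Am *ᵥ Pi.single k 1)) = ptop (MC *ᵥ Pi.single k 1)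
      have : Am *ᵥ Pi.single k 1 = a k := by
        rw [Matrix.mulVec_single]
        funext i
        simp [hAm]
      rw [this, haa k]
    exact LinearMap.congr_fun this w
  set p' : ((Fin nc ⊕ Fin na) → R) →ₗ[R] B
    := ptop.comp (LinearMap.funLeft R R (Sum.inl : Fin nc → Fin nc ⊕ Fin na))
      + (f.comp pA).comp (LinearMap.funLeft R R (Sum.inr : Fin na → Fin nc ⊕ Fin na)) with hp'
  have hp'app : ∀ u : (Fin nc ⊕ Fin na) → R,
      p' u = ptop (u ∘ Sum.inl) + f (pA (u ∘ Sum.inr)) := fun u => rfl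
  refine ⟨Am, p', ?_, ?_⟩
  · -- surjectivity
    intro b
    obtain ⟨x, hx⟩ := hpC (g b)
    have h1 : g (b - ptop x) = 0 := by
      rw [map_sub, hgtop' x, hx, sub_self]
    have h2 : b - ptop x ∈ LinearMap.range f := by rw [← hexact]; exact h1
    obtain ⟨aa, haa2⟩ := h2
    obtain ⟨u, hu⟩ := hpA aa
    refine ⟨Sum.elim x u, ?_⟩
    rw [hp'app]
    have e1 : (Sum.elim x u : Fin nc ⊕ Fin na → R) ∘ Sum.inl = x := rfl
    have e2 : (Sum.elim x u : Fin nc ⊕ Fin na → R) ∘ Sum.inr = u := rfl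
    rw [e1, e2, hu, haa2]
    abel
  · -- kernel
    apply le_antisymm
    · intro u hu
      rw [LinearMap.mem_ker, hp'app] at hu
      have hgu : pC (u ∘ Sum.inl) = 0 := by
        have := congrArg g hu
        rw [map_add, map_zero, hgtop'] at this
        have hker : g (f (pA (u ∘ Sum.inr))) = 0 := by
          have : f (pA (u ∘ Sum.inr)) ∈ LinearMap.ker g := by
            rw [hexact]
            exact ⟨pA (u ∘ Sum.inr), rfl⟩
          exact this
        rw [hker, add_zero] at this
        exact this
      have : (u ∘ Sum.inl) ∈ LinearMap.range MC.mulVecLin := by rw [← hkerC]; exact hgu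
      obtain ⟨w, hw⟩ := this
      rw [Matrix.mulVecLin_apply] at hw
      have hfu : f (pA (Am *ᵥ w + u ∘ Sum.inr)) = 0 := by
        rw [map_add, map_add, hAmkey w, hw]
        exact hu
      have hpau : pA (Am *ᵥ w + u ∘ Sum.inr) = 0 := by
        apply hf
        rw [hfu, map_zero]
      have : (Am *ᵥ w + u ∘ Sum.inr) ∈ LinearMap.range MA.mulVecLin := by
        rw [← hkerA]; exact hpau
      obtain ⟨z, hz⟩ := this
      rw [Matrix.mulVecLin_apply] at hz
      refine ⟨Sum.elim w z, ?_⟩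
      rw [Matrix.mulVecLin_apply]
      conv_lhs => rw [sum_elim_comp_decomp (Sum.elim w z)]
      rw [Matrix.fromBlocks_mulVec]
      simp only [Sum.elim_comp_inl, Sum.elim_comp_inr]
      rw [Matrix.zero_mulVec, add_zero, Matrix.neg_mulVec]
      funext x
      rcases x with j | i
      · show (MC *ᵥ w) j = u (Sum.inl j)
        rw [hw]
        rfl
      · show (-(Am *ᵥ w) + MA *ᵥ z) i = u (Sum.inr i)
        rw [hz]
        show (-(Am *ᵥ w) + (Am *ᵥ w + u ∘ Sum.inr)) i = u (Sum.inr i)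
        simp
    · rintro u ⟨w, rfl⟩
      rw [LinearMap.mem_ker]
      have hm : (Matrix.fromBlocks MC 0 (-Am) MA).mulVecLin w
          = Sum.elim (MC *ᵥ (w ∘ Sum.inl) + (0 : Matrix (Fin nc) (Fin ma) R) *ᵥ (w ∘ Sum.inr))
              ((-Am) *ᵥ (w ∘ Sum.inl) + MA *ᵥ (w ∘ Sum.inr)) := by
        rw [Matrix.mulVecLin_apply]
        conv_lhs => rw [sum_elim_comp_decomp w]
        rw [Matrix.fromBlocks_mulVec]
        simp only [Sum.elim_comp_inl, Sum.elim_comp_inr]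
      rw [hm, hp'app]
      have e1 : (Sum.elim (MC *ᵥ (w ∘ Sum.inl) + (0 : Matrix (Fin nc) (Fin ma) R) *ᵥ (w ∘ Sum.inr))
          ((-Am) *ᵥ (w ∘ Sum.inl) + MA *ᵥ (w ∘ Sum.inr))) ∘ Sum.inl
          = MC *ᵥ (w ∘ Sum.inl) + (0 : Matrix (Fin nc) (Fin ma) R) *ᵥ (w ∘ Sum.inr) := rfl
      have e2 : (Sum.elim (MC *ᵥ (w ∘ Sum.inl) + (0 : Matrix (Fin nc) (Fin ma) R) *ᵥ (w ∘ Sum.inr))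
          ((-Am) *ᵥ (w ∘ Sum.inl) + MA *ᵥ (w ∘ Sum.inr))) ∘ Sum.inr
          = (-Am) *ᵥ (w ∘ Sum.inl) + MA *ᵥ (w ∘ Sum.inr) := rfl
      rw [e1, e2, Matrix.zero_mulVec, add_zero, map_add, map_add, Matrix.neg_mulVec, map_neg,
        map_neg]
      have hA0 : pA (MA *ᵥ (w ∘ Sum.inr)) = 0 := by
        have : (MA *ᵥ (w ∘ Sum.inr)) ∈ LinearMap.range MA.mulVecLin := ⟨w ∘ Sum.inr, rfl⟩
        rw [← hkerA] at this
        exact this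
      rw [hA0, map_zero, add_zero, hAmkey (w ∘ Sum.inl)]
      abel

lemma elemIdeal_eq_minors {n m : ℕ} (M : Matrix (Fin n) (Fin m) R) (i : ℕ) :
    elemIdeal M i = minors M (n - i) := rfl

end AuxFitting


/-- Over a Noetherian UFD `R`, if `0 → A → B → C → 0` is a short exact sequence of
finitely generated `R`-modules, then for every `i ≥ 0` the characteristic polynomial
`Δ_i(B)` divides `Δ_i(A) · Δ_0(C)` in `R`. -/
theorem charPoly_dvd_of_ses
    {R : Type*} [CommRing R] [IsDomain R] [IsNoetherianRing R] [UniqueFactorizationMonoid R]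
    {A B C : Type*} [AddCommGroup A] [Module R A] [Module.Finite R A]
    [AddCommGroup B] [Module R B] [Module.Finite R B]
    [AddCommGroup C] [Module R C] [Module.Finite R C]
    (f : A →ₗ[R] B) (g : B →ₗ[R] C)
    (hf : Function.Injective f) (hg : Function.Surjective g)
    (hexact : LinearMap.ker g = LinearMap.range f)
    {na ma nb mb nc mc : ℕ}
    (MA : Matrix (Fin na) (Fin ma) R) (pA : (Fin na → R) →ₗ[R] A)
    (hpA : Function.Surjective pA)
    (hkerA : LinearMap.ker pA = LinearMap.range MA.mulVecLin)
    (MB : Matrix (Fin nb) (Fin mb) R) (pB : (Fin nb → R) →ₗ[R] B)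
    (hpB : Function.Surjective pB)
    (hkerB : LinearMap.ker pB = LinearMap.range MB.mulVecLin)
    (MC : Matrix (Fin nc) (Fin mc) R) (pC : (Fin nc → R) →ₗ[R] C)
    (hpC : Function.Surjective pC)
    (hkerC : LinearMap.ker pC = LinearMap.range MC.mulVecLin)
    (i : ℕ) (dAi dBi dC0 : R)
    (hdAi : IsGCDOfIdeal dAi (elemIdeal MA i))
    (hdBi : IsGCDOfIdeal dBi (elemIdeal MB i))
    (hdC0 : IsGCDOfIdeal dC0 (elemIdeal MC 0)) :
    dBi ∣ dAi * dC0 := by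
  classical
  letI : StrongNormalizationMonoid R := UniqueFactorizationMonoid.normalizationMonoid
  letI : StrongNormalizedGCDMonoid R := UniqueFactorizationMonoid.toStrongNormalizedGCDMonoid R
  obtain ⟨Am, p', hp'surj, hker'⟩ :=
    horseshoe_pres f g hf hg hexact MA pA hpA hkerA MC pC hpC hkerC
  set M' := Matrix.fromBlocks MC 0 (-Am) MA with hM'
  have heq0 : minors M' (Fintype.card (Fin nc ⊕ Fin na) - i)
      = minors MB (Fintype.card (Fin nb) - i) :=
    minors_pres_eq M' p' hp'surj hker' MB pB hpB hkerB i
  have heq : minors M' (nc + na - i) = minors MB (nb - i) := by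
    simpa [Fintype.card_sum, Fintype.card_fin] using heq0
  -- the product of a maximal minor of MC and an (na - i)-minor of MA is a minor of M'
  have hprod : ∀ (r1 : Fin nc → Fin nc) (c1 : Fin nc → Fin mc)
      (r2 : Fin (na - i) → Fin na) (c2 : Fin (na - i) → Fin ma),
      (MC.submatrix r1 c1).det * (MA.submatrix r2 c2).det ∈ minors M' (nc + (na - i)) := by
    intro r1 c1 r2 c2
    set rows : Fin (nc + (na - i)) → Fin nc ⊕ Fin na := Sum.map r1 r2 ∘ finSumFinEquiv.symm
      with hrows
    set cols : Fin (nc + (na - i)) → Fin mc ⊕ Fin ma := Sum.map c1 c2 ∘ finSumFinEquiv.symm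
      with hcols
    have key : M'.submatrix rows cols
        = (Matrix.fromBlocks (MC.submatrix r1 c1) 0 ((-Am).submatrix r2 c1)
            (MA.submatrix r2 c2)).submatrix finSumFinEquiv.symm finSumFinEquiv.symm := by
      ext x y
      rw [Matrix.submatrix_apply, Matrix.submatrix_apply, hrows, hcols,
        Function.comp_apply, Function.comp_apply]
      rcases finSumFinEquiv.symm x with p | p <;> rcases finSumFinEquiv.symm y with q | q
      · rfl
      · rfl
      · rfl
      · rfl
    have hdet : (MC.submatrix r1 c1).det * (MA.submatrix r2 c2).det
        = (M'.submatrix rows cols).det := by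
      rw [key, Matrix.det_submatrix_equiv_self, Matrix.det_fromBlocks_zero₁₂]
    rw [hdet]
    exact det_mem_minors M' _ rows cols
  -- dBi divides each such product
  have hdvd : ∀ (q : (Fin nc → Fin nc) × (Fin nc → Fin mc))
      (p : (Fin (na - i) → Fin na) × (Fin (na - i) → Fin ma)),
      dBi ∣ (MC.submatrix q.1 q.2).det * (MA.submatrix p.1 p.2).det := by
    intro q p
    apply hdBi.1
    show _ ∈ minors MB (nb - i)
    rw [← heq]
    refine minors_le_minors M' (by omega : nc + na - i ≤ nc + (na - i)) ?_
    exact hprod q.1 q.2 p.1 p.2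
  -- gcds of the generating minors
  set gA : R := (Finset.univ : Finset ((Fin (na - i) → Fin na) × (Fin (na - i) → Fin ma))).gcd
    (fun p => (MA.submatrix p.1 p.2).det) with hgA
  set gC : R := (Finset.univ : Finset ((Fin nc → Fin nc) × (Fin nc → Fin mc))).gcd
    (fun q => (MC.submatrix q.1 q.2).det) with hgC
  have hgA_dvd : gA ∣ dAi := by
    refine hdAi.2 gA fun x hx => ?_
    have hle : elemIdeal MA i ≤ Ideal.span {gA} := by
      rw [elemIdeal_eq_minors, minors, Ideal.span_le]
      rintro x ⟨r, c, rfl⟩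
      rw [SetLike.mem_coe, Ideal.mem_span_singleton]
      exact Finset.gcd_dvd (Finset.mem_univ (r, c))
    exact Ideal.mem_span_singleton.1 (hle hx)
  have hgC_dvd : gC ∣ dC0 := by
    refine hdC0.2 gC fun x hx => ?_
    have hle : elemIdeal MC 0 ≤ Ideal.span {gC} := by
      rw [elemIdeal_eq_minors, Nat.sub_zero, minors, Ideal.span_le]
      rintro x ⟨r, c, rfl⟩
      rw [SetLike.mem_coe, Ideal.mem_span_singleton]
      exact Finset.gcd_dvd (Finset.mem_univ (r, c))
    exact Ideal.mem_span_singleton.1 (hle hx)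
  have h5 : ∀ q : (Fin nc → Fin nc) × (Fin nc → Fin mc),
      dBi ∣ (MC.submatrix q.1 q.2).det * gA := by
    intro q
    have h6 : dBi ∣ (Finset.univ : Finset ((Fin (na - i) → Fin na) × (Fin (na - i) → Fin ma))).gcd
        (fun p => (MC.submatrix q.1 q.2).det * (MA.submatrix p.1 p.2).det) :=
      Finset.dvd_gcd fun p _ => hdvd q p
    rw [Finset.gcd_mul_left] at h6
    exact h6.trans ((Associated.mul_right (normalize_associated _) _).dvd)
  have h7 : dBi ∣ (Finset.univ : Finset ((Fin nc → Fin nc) × (Fin nc → Fin mc))).gcd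
      (fun q => gA * (MC.submatrix q.1 q.2).det) :=
    Finset.dvd_gcd fun q _ => (mul_comm ((MC.submatrix q.1 q.2).det) gA) ▸ h5 q
  rw [Finset.gcd_mul_left] at h7
  have h8 : dBi ∣ gA * gC := h7.trans ((Associated.mul_right (normalize_associated _) _).dvd)
  exact h8.trans (mul_dvd_mul hgA_dvd hgC_dvd)
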